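/- If x satisfies 4 - 19(3x) - 22(3x)^2 - 107(3x)^3 = 0 and 0 < x < 1/12, then 2*sqrt(x(1+18x^2)/(1-12x)) = 3x(1+15x)/(1-12x). -/

import Mathlib

theorem fixed_point_sqrt_identity (x : ℝ)
    (hroot : 4 - 19*(3*x) - 22*(3*x)^2 - 107*(3*x)^3 = 0)
    (hx0 : 0 < x) (hx1 : x < 1/12) :
    2 * Real.sqrt (x*(1+18*x^2)/(1-12*x)) = 3*x*(1+15*x)/(1-12*x) := by
  have hden : (0:ℝ) < 1 - 12*x := by linarith
  have key : x*(1+18*x^2)/(1-12*x) = (3*x*(1+15*x)/(2*(1-12*x)))^2 := by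
    rw [div_pow, eq_div_iff (by positivity), div_mul_eq_mul_div, div_eq_iff hden.ne']
    linear_combination x*(1-12*x)*hroot
  rw [key, Real.sqrt_sq (by positivity)]
  field_simp
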